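/- Let (S, T⁺) be a nonempty coherent space, i.e., a compact sober space whose compact open subsets form a base closed under finite intersections, and let T⁻ be the topology on S generated by the family {S∖U : U compact open in (S, T⁺)}. Then (S, T⁺, T⁻) is an abstract spectrum; in particular, the topology sup{T⁺, T⁻} is compact. -/

import Mathlib

/-- `B` is a base for the topology `t`: every element of `B` is open and every
open set is a union of elements of `B`. -/
def IsBaseFor {S : Type*} (t : TopologicalSpace S) (B : Set (Set S)) : Prop :=
  (∀ V ∈ B, t.IsOpen V) ∧ ∀ U : Set S, t.IsOpen U → ∀ x ∈ U, ∃ V ∈ B, x ∈ V ∧ V ⊆ U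

/-- The family `L⁺ = {U ∈ T⁺ : S∖U ∈ T⁻}` (for `specL tp tm`); `specL tm tp` is `L⁻`. -/
def specL {S : Type*} (tp tm : TopologicalSpace S) : Set (Set S) :=
  {U | tp.IsOpen U ∧ tm.IsOpen Uᶜ}

/-- `(S, T⁺, T⁻)` is an abstract spectrum. -/
structure IsAbstractSpectrum {S : Type*} (tp tm : TopologicalSpace S) : Prop where
  nonempty : Nonempty S
  base_plus : IsBaseFor tp (specL tp tm)
  base_minus : IsBaseFor tm (specL tm tp)
  compact_of_plus_closed : ∀ F : Set S, @IsClosed S tp F → @IsCompact S tm F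
  compact_of_minus_closed : ∀ F : Set S, @IsClosed S tm F → @IsCompact S tp F
  t0 : @T0Space S tp ∨ @T0Space S tm

open TopologicalSpace Filter Set

lemma stmt16_key {S : Type*} [TopologicalSpace S] [CompactSpace S]
    (hsober : ∀ F : Set S, IsClosed F → F.Nonempty →
      (∀ F₁ F₂ : Set S, IsClosed F₁ → IsClosed F₂ → F = F₁ ∪ F₂ → F = F₁ ∨ F = F₂) →
      ∃ x : S, F = closure {x})
    (hbase : ∀ U : Set S, IsOpen U → ∀ x ∈ U, ∃ V, (IsOpen V ∧ IsCompact V) ∧ x ∈ V ∧ V ⊆ U)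
    (hinter : ∀ U V : Set S, IsOpen U → IsCompact U → IsOpen V → IsCompact V →
      IsCompact (U ∩ V))
    (f : Ultrafilter S) :
    ∃ x : S, ∀ U : Set S, IsOpen U → IsCompact U → (x ∈ U ↔ U ∈ f) := by
  classical
  set Q : Set (Set S) := {U | IsOpen U ∧ IsCompact U ∧ U ∉ f} with hQ
  set Z : Set S := (⋃₀ Q)ᶜ with hZ
  have hZclosed : IsClosed Z := (isOpen_sUnion (fun U hU => hU.1)).isClosed_compl
  have hmeet : ∀ U : Set S, IsOpen U → IsCompact U → U ∈ f → (U ∩ Z).Nonempty := by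
    intro U hUo hUc hUf
    by_contra h
    rw [Set.not_nonempty_iff_eq_empty] at h
    have hsub : U ⊆ ⋃ V ∈ Q, V := by
      rw [← Set.sUnion_eq_biUnion]
      intro x hx
      by_contra hx'
      exact (Set.eq_empty_iff_forall_notMem.mp h x) ⟨hx, hx'⟩
    obtain ⟨t, htQ, htfin, hcov⟩ := hUc.elim_finite_subcover_image (fun V hV => hV.1) hsub
    have hm : (⋃ V ∈ t, V) ∈ f := Filter.mem_of_superset hUf hcov
    rw [Ultrafilter.finite_biUnion_mem_iff htfin] at hm
    obtain ⟨V, hVt, hVf⟩ := hm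
    exact (htQ hVt).2.2 hVf
  have hZne : Z.Nonempty := by
    obtain ⟨x, _, hx⟩ := hmeet univ isOpen_univ isCompact_univ Filter.univ_mem
    exact ⟨x, hx⟩
  have hirr : ∀ F₁ F₂ : Set S, IsClosed F₁ → IsClosed F₂ → Z = F₁ ∪ F₂ → Z = F₁ ∨ Z = F₂ := by
    intro F₁ F₂ h₁ h₂ hun
    by_contra h
    push_neg at h
    obtain ⟨hne₁, hne₂⟩ := h
    have hs₁ : ¬ Z ⊆ F₁ := fun hsub => hne₁ (hsub.antisymm (hun ▸ Set.subset_union_left))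
    have hs₂ : ¬ Z ⊆ F₂ := fun hsub => hne₂ (hsub.antisymm (hun ▸ Set.subset_union_right))
    obtain ⟨z₁, hz₁Z, hz₁⟩ := Set.not_subset.mp hs₁
    obtain ⟨z₂, hz₂Z, hz₂⟩ := Set.not_subset.mp hs₂
    obtain ⟨U₁, ⟨hU₁o, hU₁c⟩, hz₁U, hU₁sub⟩ := hbase F₁ᶜ h₁.isOpen_compl z₁ hz₁
    obtain ⟨U₂, ⟨hU₂o, hU₂c⟩, hz₂U, hU₂sub⟩ := hbase F₂ᶜ h₂.isOpen_compl z₂ hz₂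
    have hU₁f : U₁ ∈ f := by
      by_contra hU
      exact hz₁Z ⟨U₁, ⟨hU₁o, hU₁c, hU⟩, hz₁U⟩
    have hU₂f : U₂ ∈ f := by
      by_contra hU
      exact hz₂Z ⟨U₂, ⟨hU₂o, hU₂c, hU⟩, hz₂U⟩
    obtain ⟨w, ⟨hw₁, hw₂⟩, hwZ⟩ := hmeet (U₁ ∩ U₂) (hU₁o.inter hU₂o)
      (hinter _ _ hU₁o hU₁c hU₂o hU₂c) (Filter.inter_mem hU₁f hU₂f)
    rcases hun ▸ hwZ with hw | hw
    · exact hU₁sub hw₁ hw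
    · exact hU₂sub hw₂ hw
  obtain ⟨x, hx⟩ := hsober Z hZclosed hZne hirr
  refine ⟨x, fun U hUo hUc => ⟨?_, ?_⟩⟩
  · intro hxU
    by_contra hUf
    have hxZ : x ∈ Z := by rw [hx]; exact subset_closure rfl
    exact hxZ ⟨U, ⟨hUo, hUc, hUf⟩, hxU⟩
  · intro hUf
    obtain ⟨w, hwU, hwZ⟩ := hmeet U hUo hUc hUf
    rw [hx] at hwZ
    have hne : (U ∩ ({x} : Set S)).Nonempty :=
      closure_nonempty_iff.mp ⟨w, hUo.inter_closure ⟨hwU, hwZ⟩⟩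
    obtain ⟨y, hyU, hy⟩ := hne
    rwa [Set.mem_singleton_iff.mp hy] at hyU

/-- Let `(S, T⁺)` be a nonempty coherent space (compact, T₀, sober, with the compact open
sets a base closed under finite intersections) and let `T⁻` be the topology generated by
the complements of compact open sets. Then `(S, T⁺, T⁻)` is an abstract spectrum; in
particular the topology `sup{T⁺, T⁻}` is compact. -/
theorem stmt16 {S : Type*} [Nonempty S] (tp : TopologicalSpace S)
    (hcomp : @CompactSpace S tp) (ht0 : @T0Space S tp)
    (hsober : ∀ F : Set S, @IsClosed S tp F → F.Nonempty →
      (∀ F₁ F₂ : Set S, @IsClosed S tp F₁ → @IsClosed S tp F₂ → F = F₁ ∪ F₂ →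
        F = F₁ ∨ F = F₂) →
      ∃ x : S, F = @closure S tp {x})
    (hbase : IsBaseFor tp {U : Set S | tp.IsOpen U ∧ @IsCompact S tp U})
    (hinter : ∀ U V : Set S, tp.IsOpen U → @IsCompact S tp U → tp.IsOpen V →
      @IsCompact S tp V → @IsCompact S tp (U ∩ V))
    (tm : TopologicalSpace S)
    (htm : tm = TopologicalSpace.generateFrom
      {V : Set S | ∃ U : Set S, tp.IsOpen U ∧ @IsCompact S tp U ∧ V = Uᶜ}) :
    IsAbstractSpectrum tp tm ∧
    @CompactSpace S (TopologicalSpace.generateFrom {U : Set S | tp.IsOpen U ∨ tm.IsOpen U}) := by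
  classical
  obtain ⟨hbase_open, hbase_mem⟩ := hbase
  have key : ∀ f : Ultrafilter S, ∃ x : S, ∀ U : Set S, tp.IsOpen U →
      @IsCompact S tp U → (x ∈ U ↔ U ∈ f) := by
    intro f
    refine @stmt16_key S tp hcomp hsober ?_ hinter f
    intro U hU x hx
    obtain ⟨V, hV, h1, h2⟩ := hbase_mem U hU x hx
    exact ⟨V, ⟨hV.1, hV.2⟩, h1, h2⟩
  have hgopen : ∀ U : Set S, tp.IsOpen U → @IsCompact S tp U → tm.IsOpen Uᶜ := by
    intro U h1 h2
    rw [htm]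
    exact TopologicalSpace.GenerateOpen.basic _ ⟨U, h1, h2, rfl⟩
  have h_tm : ∀ (f : Ultrafilter S) (x : S),
      (∀ U : Set S, tp.IsOpen U → @IsCompact S tp U → (x ∈ U ↔ U ∈ f)) →
      (f : Filter S) ≤ @nhds S tm x := by
    intro f x hxf
    rw [htm, TopologicalSpace.nhds_generateFrom]
    simp only [le_iInf_iff, Filter.le_principal_iff]
    rintro s ⟨hxs, U, hUo, hUc, rfl⟩
    exact Ultrafilter.compl_mem_iff_notMem.mpr (fun hUf => hxs ((hxf U hUo hUc).mpr hUf))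
  have h_tp : ∀ (f : Ultrafilter S) (x : S),
      (∀ U : Set S, tp.IsOpen U → @IsCompact S tp U → (x ∈ U ↔ U ∈ f)) →
      (f : Filter S) ≤ @nhds S tp x := by
    intro f x hxf
    letI := tp
    rw [le_nhds_iff]
    intro s hxs hso
    obtain ⟨V, hV, hxV, hVs⟩ := hbase_mem s hso x hxs
    exact Filter.mem_of_superset ((hxf V hV.1 hV.2).mp hxV) hVs
  have hLp : IsBaseFor tp (specL tp tm) := by
    refine ⟨fun V hV => hV.1, ?_⟩
    intro U hU x hx
    obtain ⟨V, hV, hxV, hVU⟩ := hbase_mem U hU x hx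
    exact ⟨V, ⟨hV.1, hgopen V hV.1 hV.2⟩, hxV, hVU⟩
  have hLm : IsBaseFor tm (specL tm tp) := by
    have hbasis := @TopologicalSpace.isTopologicalBasis_of_subbasis S tm _ htm
    refine ⟨fun V hV => hV.1, ?_⟩
    intro U hU x hx
    obtain ⟨V, hVB, hxV, hVU⟩ :=
      hbasis.exists_subset_of_mem_open hx hU
    refine ⟨V, ⟨hbasis.isOpen hVB, ?_⟩, hxV, hVU⟩
    obtain ⟨fs, ⟨hfin, hsub⟩, rfl⟩ := hVB
    rw [Set.compl_sInter]
    refine @isOpen_sUnion S tp _ ?_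
    rintro W ⟨s, hs, rfl⟩
    obtain ⟨U', hU'o, hU'c, rfl⟩ := hsub hs
    rwa [compl_compl]
  have hcpc : ∀ F : Set S, @IsClosed S tp F → @IsCompact S tm F := by
    intro F hF
    rw [@isCompact_iff_ultrafilter_le_nhds S tm F]
    intro f hFf
    have hFf' : F ∈ f := Filter.le_principal_iff.mp hFf
    obtain ⟨x, hx⟩ := key f
    have hxF : x ∈ F := by
      by_contra hxF
      obtain ⟨V, hV, hxV, hVs⟩ := hbase_mem Fᶜ hF.isOpen_compl x hxF
      have : Fᶜ ∈ f := Filter.mem_of_superset ((hx V hV.1 hV.2).mp hxV) hVs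
      exact Ultrafilter.compl_mem_iff_notMem.mp this hFf'
    exact ⟨x, hxF, h_tm f x hx⟩
  have hcmc : ∀ F : Set S, @IsClosed S tm F → @IsCompact S tp F := by
    intro F hF
    rw [@isCompact_iff_ultrafilter_le_nhds S tp F]
    intro f hFf
    have hFf' : F ∈ f := Filter.le_principal_iff.mp hFf
    obtain ⟨x, hx⟩ := key f
    have hxF : x ∈ F := by
      by_contra hxF
      have : Fᶜ ∈ f := h_tm f x hx (@IsOpen.mem_nhds S tm x Fᶜ hF.isOpen_compl hxF)
      exact Ultrafilter.compl_mem_iff_notMem.mp this hFf'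
    exact ⟨x, hxF, h_tp f x hx⟩
  have hpatch : @CompactSpace S
      (TopologicalSpace.generateFrom {U : Set S | tp.IsOpen U ∨ tm.IsOpen U}) := by
    refine @CompactSpace.mk S
      (TopologicalSpace.generateFrom {U : Set S | tp.IsOpen U ∨ tm.IsOpen U}) ?_
    rw [@isCompact_iff_ultrafilter_le_nhds S
      (TopologicalSpace.generateFrom {U : Set S | tp.IsOpen U ∨ tm.IsOpen U}) Set.univ]
    intro f _
    obtain ⟨x, hx⟩ := key f
    refine ⟨x, Set.mem_univ x, ?_⟩
    rw [TopologicalSpace.nhds_generateFrom]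
    simp only [le_iInf_iff, Filter.le_principal_iff]
    rintro s ⟨hxs, hs | hs⟩
    · exact h_tp f x hx (@IsOpen.mem_nhds S tp x s hs hxs)
    · exact h_tm f x hx (@IsOpen.mem_nhds S tm x s hs hxs)
  exact ⟨⟨‹Nonempty S›, hLp, hLm, hcpc, hcmc, Or.inl ht0⟩, hpatch⟩
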